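/- Let n ≥ 1, μ ∈ ℝⁿ, and Σ a positive definite symmetric real n×n matrix, and let ν = ν_{μ,Σ} be the corresponding Gaussian measure on ℝⁿ. With M(x) = −(1/2)Σ⁻¹ + (1/2)Σ⁻¹(x−μ)(x−μ)ᵀΣ⁻¹ and K = Σ⁻¹, for all indices a, b, c, d one has ∫ M(x)_{ab}·M(x)_{cd} dν(x) = (1/4)(K_{ac}K_{bd} + K_{ad}K_{bc}). (This is the (Σ,Σ)-block g_{ΣΣ} = (1/2)Σ⁻¹⊗Σ⁻¹ of the Fisher metric tensor of the multivariate Gaussian family, written in symmetrized component form.) -/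

import Mathlib

open MeasureTheory Matrix Real

/-- The Lebesgue density of the multivariate Gaussian distribution with mean `μ` and
covariance matrix `S` on `ℝⁿ`. -/
noncomputable def mvGaussDensity {n : ℕ} (μ : Fin n → ℝ) (S : Matrix (Fin n) (Fin n) ℝ)
    (x : Fin n → ℝ) : ℝ :=
  (2 * π) ^ (-(n : ℝ) / 2) * S.det ^ (-(1 : ℝ) / 2) *
    Real.exp (-(1 / 2) * ((x - μ) ⬝ᵥ (S⁻¹ *ᵥ (x - μ))))

/-- The multivariate Gaussian measure `ν_{μ,Σ}` on `ℝⁿ`, given by its Lebesgue density. -/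
noncomputable def mvGaussMeasure {n : ℕ} (μ : Fin n → ℝ) (S : Matrix (Fin n) (Fin n) ℝ) :
    Measure (Fin n → ℝ) :=
  volume.withDensity fun x => ENNReal.ofReal (mvGaussDensity μ S x)

/-- The score of the multivariate Gaussian log-likelihood with respect to the covariance
parameter: M(x) = −(1/2)Σ⁻¹ + (1/2)Σ⁻¹(x−μ)(x−μ)ᵀΣ⁻¹. -/
noncomputable def mvScoreSigma {n : ℕ} (μ : Fin n → ℝ) (S : Matrix (Fin n) (Fin n) ℝ)
    (x : Fin n → ℝ) : Matrix (Fin n) (Fin n) ℝ :=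
  (-(1 / 2) : ℝ) • S⁻¹ + ((1 / 2) : ℝ) • (S⁻¹ * Matrix.vecMulVec (x - μ) (x - μ) * S⁻¹)

open Filter
open scoped NNReal ENNReal

noncomputable def stdMom (k : ℕ) : ℝ := ∫ x : ℝ, x ^ k * Real.exp (-(1/2) * x ^ 2)

lemma integrable_pow_gauss (k : ℕ) :
    Integrable (fun x : ℝ => x ^ k * Real.exp (-(1/2) * x ^ 2)) := by
  have h := integrable_rpow_mul_exp_neg_mul_sq (by norm_num : (0:ℝ) < 1/2)
    (s := (k : ℝ)) (lt_of_lt_of_le (by norm_num) (Nat.cast_nonneg k))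
  simpa [Real.rpow_natCast, neg_mul] using h

lemma tendsto_pow_gauss_atTop (k : ℕ) :
    Tendsto (fun x : ℝ => x ^ k * Real.exp (-(1/2) * x ^ 2)) atTop (nhds 0) := by
  have h := rpow_mul_exp_neg_mul_sq_isLittleO_exp_neg (by norm_num : (0:ℝ) < 1/2) (s := (k:ℝ))
  have h2 : (fun x : ℝ => x ^ k * Real.exp (-(1/2) * x ^ 2)) =o[atTop]
      fun x : ℝ => Real.exp (-(1/2) * x) := by
    refine h.congr' (Eventually.of_forall fun x => ?_) (Eventually.of_forall fun x => rfl)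
    simp [Real.rpow_natCast]
  have h3 : Tendsto (fun x : ℝ => Real.exp (-(1/2) * x)) atTop (nhds 0) := by
    apply Real.tendsto_exp_atBot.comp
    exact (tendsto_const_mul_atBot_of_neg (by norm_num)).mpr tendsto_id
  exact h2.isBigO.trans_tendsto h3

lemma tendsto_pow_gauss_atBot (k : ℕ) :
    Tendsto (fun x : ℝ => x ^ k * Real.exp (-(1/2) * x ^ 2)) atBot (nhds 0) := by
  have h := (tendsto_pow_gauss_atTop k).comp tendsto_neg_atBot_atTop
  have : (fun x : ℝ => (-x) ^ k * Real.exp (-(1/2) * (-x) ^ 2))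
      = fun x : ℝ => (-1) ^ k * (x ^ k * Real.exp (-(1/2) * x ^ 2)) := by
    funext x; rw [neg_pow, neg_sq]; ring
  rw [Function.comp_def] at h
  simp only [this] at h
  have h2 := h.const_mul ((-1 : ℝ) ^ k)
  simpa [← mul_assoc, ← mul_pow] using h2

lemma stdMom_rec (k : ℕ) : stdMom (k + 2) = (k + 1) * stdMom k := by
  have hderiv : ∀ x : ℝ, HasDerivAt (fun x : ℝ => x ^ (k+1) * Real.exp (-(1/2) * x ^ 2))
      ((k+1 : ℝ) * x ^ k * Real.exp (-(1/2) * x ^ 2)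
        - x ^ (k+2) * Real.exp (-(1/2) * x ^ 2)) x := by
    intro x
    have h1 : HasDerivAt (fun x : ℝ => x ^ (k+1)) ((k+1 : ℝ) * x ^ k) x := by
      simpa using hasDerivAt_pow (k+1) x
    have h2 : HasDerivAt (fun x : ℝ => Real.exp (-(1/2) * x ^ 2))
        (Real.exp (-(1/2) * x ^ 2) * (-(1/2) * (2 * x))) x := by
      exact (((hasDerivAt_pow 2 x).const_mul (-(1/2:ℝ))).exp).congr_deriv (by ring_nf)
    have := h1.mul h2
    refine this.congr_deriv ?_
    ring
  have hint : Integrable (fun x : ℝ => (k+1 : ℝ) * x ^ k * Real.exp (-(1/2) * x ^ 2)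
      - x ^ (k+2) * Real.exp (-(1/2) * x ^ 2)) := by
    simpa [mul_assoc, Pi.sub_def] using ((integrable_pow_gauss k).const_mul (k+1 : ℝ)).sub
      (integrable_pow_gauss (k+2))
  have h0 := integral_of_hasDerivAt_of_tendsto hderiv hint
    (tendsto_pow_gauss_atBot (k+1)) (tendsto_pow_gauss_atTop (k+1))
  rw [sub_zero] at h0
  have h1 : ∫ x : ℝ, ((k+1 : ℝ) * x ^ k * Real.exp (-(1/2) * x ^ 2)
      - x ^ (k+2) * Real.exp (-(1/2) * x ^ 2))
      = (k+1 : ℝ) * stdMom k - stdMom (k+2) := by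
    rw [integral_sub (by simpa [mul_assoc] using (integrable_pow_gauss k).const_mul (k+1 : ℝ))
      (integrable_pow_gauss (k+2))]
    unfold stdMom
    rw [← integral_const_mul]
    simp [mul_assoc]
  rw [h1] at h0
  linarith

lemma stdMom_odd (k : ℕ) : stdMom (2 * k + 1) = 0 := by
  have h : ∫ x : ℝ, ((-x) ^ (2*k+1) * Real.exp (-(1/2) * (-x) ^ 2))
      = ∫ x : ℝ, x ^ (2*k+1) * Real.exp (-(1/2) * x ^ 2) := by
    exact integral_neg_eq_self (fun x => x ^ (2*k+1) * Real.exp (-(1/2) * x ^ 2)) volume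
  have h2 : ∀ x : ℝ, (-x) ^ (2*k+1) * Real.exp (-(1/2) * (-x) ^ 2)
      = -(x ^ (2*k+1) * Real.exp (-(1/2) * x ^ 2)) := by
    intro x; rw [Odd.neg_pow ⟨k, by ring⟩, neg_sq]; ring
  simp only [h2, integral_neg] at h
  unfold stdMom
  linarith

lemma stdMom_zero : stdMom 0 = Real.sqrt (2 * π) := by
  unfold stdMom
  simp only [pow_zero, one_mul]
  have := integral_gaussian (1/2)
  rw [this, show π / (1/2) = 2 * π by ring]

lemma stdMom_one : stdMom 1 = 0 := by simpa using stdMom_odd 0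
lemma stdMom_two : stdMom 2 = Real.sqrt (2 * π) := by
  have := stdMom_rec 0
  simp [stdMom_zero] at this
  simpa using this
lemma stdMom_three : stdMom 3 = 0 := by simpa using stdMom_odd 1
lemma stdMom_four : stdMom 4 = 3 * Real.sqrt (2 * π) := by
  have := stdMom_rec 2
  rw [stdMom_two] at this
  norm_num at this
  simpa using this

noncomputable def gaussN (s : ℝ) : ℝ := (2 * π) ^ (-(1:ℝ)/2) * Real.exp (-(1/2) * s ^ 2)

noncomputable def nMom (k : ℕ) : ℝ := ∫ s : ℝ, s ^ k * gaussN s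

lemma integrable_pow_gaussN (k : ℕ) : Integrable (fun s : ℝ => s ^ k * gaussN s) := by
  have := (integrable_pow_gauss k).const_mul ((2 * π) ^ (-(1:ℝ)/2))
  refine this.congr (Eventually.of_forall fun s => ?_)
  simp [gaussN]; ring

lemma nMom_eq (k : ℕ) : nMom k = (2 * π) ^ (-(1:ℝ)/2) * stdMom k := by
  unfold nMom stdMom
  rw [← integral_const_mul]
  congr 1; funext s; simp [gaussN]; ring

lemma normalizer : (2 * π) ^ (-(1:ℝ)/2) * Real.sqrt (2 * π) = 1 := by
  have h2π : (0:ℝ) < 2 * π := by positivity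
  rw [Real.sqrt_eq_rpow, ← Real.rpow_add h2π]
  norm_num

lemma nMom_zero : nMom 0 = 1 := by rw [nMom_eq, stdMom_zero, normalizer]
lemma nMom_one : nMom 1 = 0 := by rw [nMom_eq, stdMom_one, mul_zero]
lemma nMom_two : nMom 2 = 1 := by rw [nMom_eq, stdMom_two, normalizer]
lemma nMom_three : nMom 3 = 0 := by rw [nMom_eq, stdMom_three, mul_zero]
lemma nMom_four : nMom 4 = 3 := by
  rw [nMom_eq, stdMom_four, mul_comm (3:ℝ), ← mul_assoc, normalizer, one_mul]

variable {n : ℕ}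

lemma prod_ite_one (i : Fin n) (u : ℝ) : (∏ t, if i = t then u else 1) = u := by
  rw [Finset.prod_ite_eq, if_pos (Finset.mem_univ i)]

lemma prod_ite_two {i k : Fin n} (h : i ≠ k) (u v : ℝ) :
    (∏ t, if i = t then u else if k = t then v else 1) = u * v := by
  classical
  have h1 : (∏ t ∈ Finset.univ.erase i, if i = t then u else if k = t then v else 1)
      = ∏ t ∈ Finset.univ.erase i, (if k = t then v else 1) := by
    refine Finset.prod_congr rfl fun t ht => ?_
    rw [if_neg fun h' => (Finset.mem_erase.mp ht).1 h'.symm]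
  rw [← Finset.mul_prod_erase Finset.univ _ (Finset.mem_univ i), if_pos rfl, h1,
    Finset.prod_ite_eq, if_pos (Finset.mem_erase.mpr ⟨Ne.symm h, Finset.mem_univ k⟩)]

def cnt4 (i j k l : Fin n) (t : Fin n) : ℕ :=
  (if i = t then 1 else 0) + (if j = t then 1 else 0) +
    (if k = t then 1 else 0) + (if l = t then 1 else 0)

lemma prod_pow_indicator (y : Fin n → ℝ) (i : Fin n) :
    (∏ t, y t ^ (if i = t then 1 else 0)) = y i := by
  have h : ∀ t ∈ Finset.univ, y t ^ (if i = t then (1:ℕ) else 0)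
      = if i = t then y t else 1 := fun t _ => by split <;> simp
  rw [Finset.prod_congr rfl h, Finset.prod_ite_eq, if_pos (Finset.mem_univ i)]

lemma quad_prod (y : Fin n → ℝ) (i j k l : Fin n) :
    (∏ t, y t ^ (cnt4 i j k l t)) = y i * y j * y k * y l := by
  simp only [cnt4, pow_add, Finset.prod_mul_distrib, prod_pow_indicator]

noncomputable def dlt (i j : Fin n) : ℝ := if i = j then 1 else 0

lemma prod_nMom_cnt4 (i j k l : Fin n) :
    (∏ t, nMom (cnt4 i j k l t)) =
      dlt i j * dlt k l + dlt i k * dlt j l + dlt i l * dlt j k := by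
  classical
  by_cases hij : i = j
  · subst hij
    by_cases hkl : k = l
    · subst hkl
      by_cases hik : i = k
      · subst hik
        have h : ∀ t ∈ Finset.univ, nMom (cnt4 i i i i t) = if i = t then nMom 4 else 1 :=
          fun t _ => by by_cases h : i = t <;> simp [cnt4, h, nMom_zero]
        rw [Finset.prod_congr rfl h, prod_ite_one, nMom_four]
        simp [dlt]
        norm_num
      · have h : ∀ t ∈ Finset.univ, nMom (cnt4 i i k k t)
            = if i = t then nMom 2 else if k = t then nMom 2 else 1 := by
          intro t _
          by_cases h1 : i = t <;> by_cases h2 : k = t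
          · exact absurd (h1.trans h2.symm) hik
          all_goals simp [cnt4, h1, h2, nMom_zero]
        rw [Finset.prod_congr rfl h, prod_ite_two hik, nMom_two]
        simp [dlt, hik]
    · -- k ≠ l : count of k is odd
      refine Eq.trans (Finset.prod_eq_zero (Finset.mem_univ k) ?_) ?_
      · have hlk : ¬ (l = k) := fun h => hkl h.symm
        by_cases hik : i = k <;> simp [cnt4, hik, hlk, nMom_one, nMom_three]
      · have hlk : ¬ (l = k) := fun h => hkl (Eq.symm h)
        by_cases hik : i = k <;> by_cases hil : i = l
        · exact absurd (hik.symm.trans hil) hkl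
        all_goals simp [dlt, hkl, hlk, hik, hil]
  · by_cases hkl : k = l
    · subst hkl
      refine Eq.trans (Finset.prod_eq_zero (Finset.mem_univ i) ?_) ?_
      · have hji : ¬ (j = i) := fun h => hij h.symm
        by_cases hki : k = i <;> simp [cnt4, hki, hji, nMom_one, nMom_three]
      · by_cases hik : i = k <;> by_cases hjk : j = k
        · exact absurd (hik.trans hjk.symm) hij
        all_goals {
          first
          | (have hkj : ¬ (k = j) := fun h => hjk (Eq.symm h)
             simp [dlt, hij, hik, hjk, hkj])
          | simp [dlt, hij, hik, hjk] }
    · by_cases hik : i = k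
      · subst hik
        by_cases hjl : j = l
        · subst hjl
          have h : ∀ t ∈ Finset.univ, nMom (cnt4 i j i j t)
              = if i = t then nMom 2 else if j = t then nMom 2 else 1 := by
            intro t _
            by_cases h1 : i = t <;> by_cases h2 : j = t
            · exact absurd (h1.trans h2.symm) hij
            all_goals simp [cnt4, h1, h2, nMom_zero]
          rw [Finset.prod_congr rfl h, prod_ite_two hij, nMom_two]
          have hil : i ≠ j := hij
          simp [dlt, hij, fun h => hij (Eq.symm h)]
        · refine Eq.trans (Finset.prod_eq_zero (Finset.mem_univ j) ?_) ?_
          · have hij' : ¬ (i = j) := hij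
            have hlj : ¬ (l = j) := fun h => hjl h.symm
            simp [cnt4, hij', hlj, nMom_one]
          · have hji : ¬ (j = i) := fun h => hij (Eq.symm h)
            simp [dlt, hij, hjl, hji]
      · by_cases hil : i = l
        · subst hil
          by_cases hjk : j = k
          · subst hjk
            have h : ∀ t ∈ Finset.univ, nMom (cnt4 i j j i t)
                = if i = t then nMom 2 else if j = t then nMom 2 else 1 := by
              intro t _
              by_cases h1 : i = t <;> by_cases h2 : j = t
              · exact absurd (h1.trans h2.symm) hij
              all_goals simp [cnt4, h1, h2, nMom_zero]
            rw [Finset.prod_congr rfl h, prod_ite_two hij, nMom_two]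
            simp [dlt, hij, hik]
          · refine Eq.trans (Finset.prod_eq_zero (Finset.mem_univ j) ?_) ?_
            · have hij' : ¬ (i = j) := hij
              have hkj : ¬ (k = j) := fun h => hjk h.symm
              simp [cnt4, hij', hkj, nMom_one]
            · have hji : ¬ (j = i) := fun h => hij (Eq.symm h)
              simp [dlt, hij, hjk, hji]
        · refine Eq.trans (Finset.prod_eq_zero (Finset.mem_univ i) ?_) ?_
          · have hji : ¬ (j = i) := fun h => hij h.symm
            have hki : ¬ (k = i) := fun h => hik h.symm
            have hli : ¬ (l = i) := fun h => hil h.symm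
            simp [cnt4, hji, hki, hli, nMom_one]
          · simp [dlt, hij, hik, hil]

noncomputable def gProd (y : Fin n → ℝ) : ℝ := ∏ t, gaussN (y t)

lemma integrable_gaussN : Integrable gaussN := by
  simpa using integrable_pow_gaussN 0

lemma integrable_gProd : Integrable (fun y : Fin n → ℝ => gProd y) :=
  Integrable.fintype_prod fun _ => integrable_gaussN

lemma integral_gProd : (∫ y : Fin n → ℝ, gProd y) = 1 := by
  unfold gProd
  rw [MeasureTheory.integral_fintype_prod_volume_eq_prod (fun _ s => gaussN s)]
  have h0 : (∫ s : ℝ, gaussN s) = nMom 0 := by unfold nMom; simp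
  simp [h0, nMom_zero]

lemma quad_g_eq (i j k l : Fin n) :
    (fun y : Fin n → ℝ => y i * y j * y k * y l * gProd y)
      = fun y => ∏ t, (y t ^ (cnt4 i j k l t) * gaussN (y t)) := by
  funext y
  rw [Finset.prod_mul_distrib, quad_prod]
  rfl

lemma integrable_quad_g (i j k l : Fin n) :
    Integrable (fun y : Fin n → ℝ => y i * y j * y k * y l * gProd y) := by
  rw [quad_g_eq]
  exact Integrable.fintype_prod fun t => integrable_pow_gaussN (cnt4 i j k l t)

lemma integral_quad_g (i j k l : Fin n) :
    (∫ y : Fin n → ℝ, y i * y j * y k * y l * gProd y)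
      = dlt i j * dlt k l + dlt i k * dlt j l + dlt i l * dlt j k := by
  rw [quad_g_eq,
    MeasureTheory.integral_fintype_prod_volume_eq_prod
      (fun t s => s ^ (cnt4 i j k l t) * gaussN s)]
  exact prod_nMom_cnt4 i j k l

def cnt2 (i j : Fin n) (t : Fin n) : ℕ := (if i = t then 1 else 0) + (if j = t then 1 else 0)

lemma pair_g_eq (i j : Fin n) :
    (fun y : Fin n → ℝ => y i * y j * gProd y)
      = fun y => ∏ t, (y t ^ (cnt2 i j t) * gaussN (y t)) := by
  funext y
  rw [Finset.prod_mul_distrib]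
  simp only [cnt2, pow_add, Finset.prod_mul_distrib, prod_pow_indicator]
  rfl

lemma integrable_pair_g (i j : Fin n) :
    Integrable (fun y : Fin n → ℝ => y i * y j * gProd y) := by
  rw [pair_g_eq]
  exact Integrable.fintype_prod fun t => integrable_pow_gaussN (cnt2 i j t)

lemma integral_pair_g (i j : Fin n) :
    (∫ y : Fin n → ℝ, y i * y j * gProd y) = dlt i j := by
  rw [pair_g_eq,
    MeasureTheory.integral_fintype_prod_volume_eq_prod (fun t s => s ^ (cnt2 i j t) * gaussN s)]
  show (∏ t, nMom (cnt2 i j t)) = dlt i j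
  by_cases hij : i = j
  · subst hij
    have h : ∀ t ∈ Finset.univ, nMom (cnt2 i i t) = if i = t then nMom 2 else 1 :=
      fun t _ => by by_cases h : i = t <;> simp [cnt2, h, nMom_zero]
    rw [Finset.prod_congr rfl h, prod_ite_one, nMom_two]
    simp [dlt]
  · refine Eq.trans (Finset.prod_eq_zero (Finset.mem_univ i) ?_) ?_
    · have hji : ¬ (j = i) := fun h => hij (Eq.symm h)
      simp [cnt2, hji, nMom_one]
    · simp [dlt, hij]

lemma dot4_expand (v w u z : Fin n → ℝ) :
    (fun y : Fin n → ℝ => (v ⬝ᵥ y) * (w ⬝ᵥ y) * (u ⬝ᵥ y) * (z ⬝ᵥ y) * gProd y)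
      = fun y => ∑ i, ∑ j, ∑ k, ∑ l,
          (v l * w k * u j * z i) * (y i * y j * y k * y l * gProd y) := by
  funext y
  simp only [dotProduct, Finset.sum_mul, Finset.mul_sum]
  refine Finset.sum_congr rfl fun i _ => ?_
  refine Finset.sum_congr rfl fun j _ => ?_
  refine Finset.sum_congr rfl fun k _ => ?_
  refine Finset.sum_congr rfl fun l _ => ?_
  ring

lemma sum4_dlt (v w u z : Fin n → ℝ) :
    (∑ i, ∑ j, ∑ k, ∑ l, (v l * w k * u j * z i) *
      (dlt i j * dlt k l + dlt i k * dlt j l + dlt i l * dlt j k))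
      = (v ⬝ᵥ w) * (u ⬝ᵥ z) + (v ⬝ᵥ u) * (w ⬝ᵥ z) + (v ⬝ᵥ z) * (w ⬝ᵥ u) := by
  simp only [mul_add, Finset.sum_add_distrib]
  congr 1
  · congr 1
    · simp only [dlt, mul_ite, mul_one, mul_zero, ite_mul, zero_mul,
        Finset.sum_ite_irrel, Finset.sum_const_zero,
        Finset.sum_ite_eq, Finset.sum_ite_eq', Finset.mem_univ, if_true]
      simp only [dotProduct, Finset.sum_mul, Finset.mul_sum]
      refine Finset.sum_congr rfl fun p _ => ?_
      refine Finset.sum_congr rfl fun q _ => ?_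
      ring
    · simp only [dlt, mul_ite, mul_one, mul_zero, ite_mul, zero_mul,
        Finset.sum_ite_irrel, Finset.sum_const_zero,
        Finset.sum_ite_eq, Finset.sum_ite_eq', Finset.mem_univ, if_true]
      simp only [dotProduct, Finset.sum_mul, Finset.mul_sum]
      refine Finset.sum_congr rfl fun p _ => ?_
      refine Finset.sum_congr rfl fun q _ => ?_
      ring
  · simp only [dlt, mul_ite, mul_one, mul_zero, ite_mul, zero_mul,
      Finset.sum_ite_irrel, Finset.sum_const_zero,
      Finset.sum_ite_eq, Finset.sum_ite_eq', Finset.mem_univ, if_true]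
    simp only [dotProduct, Finset.sum_mul, Finset.mul_sum]
    rw [Finset.sum_comm]
    refine Finset.sum_congr rfl fun p _ => ?_
    refine Finset.sum_congr rfl fun q _ => ?_
    ring

lemma integrable_dot4 (v w u z : Fin n → ℝ) :
    Integrable (fun y : Fin n → ℝ =>
      (v ⬝ᵥ y) * (w ⬝ᵥ y) * (u ⬝ᵥ y) * (z ⬝ᵥ y) * gProd y) := by
  rw [dot4_expand]
  refine integrable_finset_sum _ fun i _ => integrable_finset_sum _ fun j _ =>
    integrable_finset_sum _ fun k _ => integrable_finset_sum _ fun l _ => ?_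
  exact (integrable_quad_g i j k l).const_mul _

lemma integral_dot4 (v w u z : Fin n → ℝ) :
    (∫ y : Fin n → ℝ, (v ⬝ᵥ y) * (w ⬝ᵥ y) * (u ⬝ᵥ y) * (z ⬝ᵥ y) * gProd y)
      = (v ⬝ᵥ w) * (u ⬝ᵥ z) + (v ⬝ᵥ u) * (w ⬝ᵥ z) + (v ⬝ᵥ z) * (w ⬝ᵥ u) := by
  rw [dot4_expand]
  rw [integral_finset_sum _ fun i _ => integrable_finset_sum _ fun j _ =>
    integrable_finset_sum _ fun k _ => integrable_finset_sum _ fun l _ =>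
    (integrable_quad_g i j k l).const_mul _]
  have h1 : ∀ i, (∫ y : Fin n → ℝ, ∑ j, ∑ k, ∑ l,
      (v l * w k * u j * z i) * (y i * y j * y k * y l * gProd y))
      = ∑ j, ∑ k, ∑ l, (v l * w k * u j * z i) *
        (dlt i j * dlt k l + dlt i k * dlt j l + dlt i l * dlt j k) := by
    intro i
    rw [integral_finset_sum _ fun j _ => integrable_finset_sum _ fun k _ =>
      integrable_finset_sum _ fun l _ => (integrable_quad_g i j k l).const_mul _]
    refine Finset.sum_congr rfl fun j _ => ?_
    rw [integral_finset_sum _ fun k _ => integrable_finset_sum _ fun l _ =>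
      (integrable_quad_g i j k l).const_mul _]
    refine Finset.sum_congr rfl fun k _ => ?_
    rw [integral_finset_sum _ fun l _ => (integrable_quad_g i j k l).const_mul _]
    refine Finset.sum_congr rfl fun l _ => ?_
    rw [MeasureTheory.integral_const_mul, integral_quad_g]
  simp only [h1]
  exact sum4_dlt v w u z

lemma dot2_expand (v w : Fin n → ℝ) :
    (fun y : Fin n → ℝ => (v ⬝ᵥ y) * (w ⬝ᵥ y) * gProd y)
      = fun y => ∑ i, ∑ j, (v j * w i) * (y i * y j * gProd y) := by
  funext y
  simp only [dotProduct, Finset.sum_mul, Finset.mul_sum]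
  refine Finset.sum_congr rfl fun i _ => ?_
  refine Finset.sum_congr rfl fun j _ => ?_
  ring

lemma integrable_dot2 (v w : Fin n → ℝ) :
    Integrable (fun y : Fin n → ℝ => (v ⬝ᵥ y) * (w ⬝ᵥ y) * gProd y) := by
  rw [dot2_expand]
  exact integrable_finset_sum _ fun i _ => integrable_finset_sum _ fun j _ =>
    (integrable_pair_g i j).const_mul _

lemma integral_dot2 (v w : Fin n → ℝ) :
    (∫ y : Fin n → ℝ, (v ⬝ᵥ y) * (w ⬝ᵥ y) * gProd y) = v ⬝ᵥ w := by
  rw [dot2_expand]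
  rw [integral_finset_sum _ fun i _ => integrable_finset_sum _ fun j _ =>
    (integrable_pair_g i j).const_mul _]
  have h1 : ∀ i, (∫ y : Fin n → ℝ, ∑ j, (v j * w i) * (y i * y j * gProd y))
      = ∑ j, (v j * w i) * dlt i j := by
    intro i
    rw [integral_finset_sum _ fun j _ => (integrable_pair_g i j).const_mul _]
    refine Finset.sum_congr rfl fun j _ => ?_
    rw [MeasureTheory.integral_const_mul, integral_pair_g]
  simp only [h1]
  simp only [dlt, mul_ite, mul_one, mul_zero, Finset.sum_ite_eq, Finset.mem_univ, if_true]
  simp only [dotProduct, mul_comm]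

section CoV

open scoped MatrixOrder in
noncomputable def psdSqrt (S : Matrix (Fin n) (Fin n) ℝ) : Matrix (Fin n) (Fin n) ℝ := CFC.sqrt S

open scoped MatrixOrder in
lemma psdSqrt_mul_self {S : Matrix (Fin n) (Fin n) ℝ} (hS : S.PosSemidef) :
    psdSqrt S * psdSqrt S = S :=
  CFC.sqrt_mul_sqrt_self S hS.nonneg

open scoped MatrixOrder in
lemma psdSqrt_posSemidef {S : Matrix (Fin n) (Fin n) ℝ} : (psdSqrt S).PosSemidef :=
  (CFC.sqrt_nonneg S).posSemidef

variable {μ : Fin n → ℝ} {S : Matrix (Fin n) (Fin n) ℝ}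

lemma continuous_qform (M : Matrix (Fin n) (Fin n) ℝ) :
    Continuous fun x : Fin n → ℝ => (x - μ) ⬝ᵥ (M *ᵥ (x - μ)) := by
  have h : (fun x : Fin n → ℝ => (x - μ) ⬝ᵥ (M *ᵥ (x - μ)))
      = fun x => ∑ i, (x i - μ i) * ∑ j, M i j * (x j - μ j) := by
    funext x; simp [dotProduct, Matrix.mulVec, Pi.sub_apply]
  rw [h]
  refine continuous_finset_sum _ fun i _ => Continuous.mul ?_ ?_
  · exact (continuous_apply i).sub continuous_const
  · exact continuous_finset_sum _ fun j _ =>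
      continuous_const.mul ((continuous_apply j).sub continuous_const)

lemma continuous_mvGaussDensity : Continuous (mvGaussDensity μ S) := by
  unfold mvGaussDensity
  exact continuous_const.mul
    (Real.continuous_exp.comp (continuous_const.mul (continuous_qform S⁻¹)))

lemma mvGaussDensity_nonneg (hS : S.PosDef) (x : Fin n → ℝ) : 0 ≤ mvGaussDensity μ S x := by
  unfold mvGaussDensity
  have h1 : (0:ℝ) ≤ (2 * π) ^ (-(n:ℝ)/2) := Real.rpow_nonneg (by positivity) _
  have h2 : (0:ℝ) ≤ S.det ^ (-(1:ℝ)/2) := Real.rpow_nonneg hS.det_pos.le _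
  exact mul_nonneg (mul_nonneg h1 h2) (Real.exp_nonneg _)

lemma score_entry (hSsymm : S.IsSymm) (x : Fin n → ℝ) (a b : Fin n) :
    mvScoreSigma μ S x a b
      = -(1/2) * S⁻¹ a b + (1/2) * ((S⁻¹ *ᵥ (x - μ)) a * (S⁻¹ *ᵥ (x - μ)) b) := by
  have hKsymm : (S⁻¹)ᵀ = S⁻¹ := by
    rw [Matrix.transpose_nonsing_inv, hSsymm.eq]
  have key : (S⁻¹ * Matrix.vecMulVec (x - μ) (x - μ) * S⁻¹) a b
      = (S⁻¹ *ᵥ (x - μ)) a * (S⁻¹ *ᵥ (x - μ)) b := by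
    simp only [Matrix.mul_apply, Matrix.vecMulVec_apply, Matrix.mulVec, dotProduct,
      Finset.sum_mul, Finset.mul_sum]
    refine Finset.sum_congr rfl fun p _ => ?_
    refine Finset.sum_congr rfl fun q _ => ?_
    have hqb : S⁻¹ p b = S⁻¹ b p := by
      conv_lhs => rw [← hKsymm]
      rfl
    rw [hqb]
    ring
  unfold mvScoreSigma
  simp only [Matrix.add_apply, Matrix.smul_apply, smul_eq_mul, key]
  try ring

lemma continuous_score_entry (hSsymm : S.IsSymm) (a b : Fin n) :
    Continuous fun x => mvScoreSigma μ S x a b := by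
  have h : (fun x => mvScoreSigma μ S x a b)
      = fun x => -(1/2) * S⁻¹ a b
          + (1/2) * ((∑ j, S⁻¹ a j * (x j - μ j)) * (∑ j, S⁻¹ b j * (x j - μ j))) := by
    funext x
    rw [score_entry hSsymm]
    simp [Matrix.mulVec, dotProduct, Pi.sub_apply]
  rw [h]
  refine continuous_const.add (continuous_const.mul (Continuous.mul ?_ ?_)) <;>
    exact continuous_finset_sum _ fun j _ =>
      continuous_const.mul ((continuous_apply j).sub continuous_const)

variable (hS : S.PosDef) (hSsymm : S.IsSymm)

lemma gauss_cov (hS : S.PosDef) (hSsymm : S.IsSymm) (F : (Fin n → ℝ) → ℝ)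
    (hF : Continuous F) :
    ∫ x, F x ∂(mvGaussMeasure μ S)
      = ∫ y, F (psdSqrt S *ᵥ y + μ) * gProd y := by
  set A := psdSqrt S with hAdef
  have hAA : A * A = S := psdSqrt_mul_self hS.posSemidef
  have hdetS : 0 < S.det := hS.det_pos
  have hdd : A.det * A.det = S.det := by rw [← Matrix.det_mul, hAA]
  have hd : A.det ≠ 0 := by
    intro h
    rw [h, mul_zero] at hdd
    exact hdetS.ne hdd
  have hAsymm : Aᵀ = A := by
    have := (psdSqrt_posSemidef (S := S)).isHermitian.eq
    rwa [Matrix.conjTranspose_eq_transpose_of_trivial] at this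
  have hCA : A⁻¹ * A = 1 := Matrix.nonsing_inv_mul A hd.isUnit
  have hAC : A * A⁻¹ = 1 := Matrix.mul_nonsing_inv A hd.isUnit
  have hSinv : S⁻¹ = A⁻¹ * A⁻¹ := by rw [← hAA, Matrix.mul_inv_rev]
  -- quadratic form identity
  have hq : ∀ y : Fin n → ℝ, (A *ᵥ y) ⬝ᵥ (S⁻¹ *ᵥ (A *ᵥ y)) = y ⬝ᵥ y := by
    intro y
    rw [Matrix.mulVec_mulVec, hSinv, Matrix.mul_assoc, hCA, Matrix.mul_one,
      dotProduct_comm, Matrix.dotProduct_mulVec, ← Matrix.mulVec_transpose, hAsymm,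
      Matrix.mulVec_mulVec, hAC, Matrix.one_mulVec]
  -- density transformation
  have hdens : ∀ y : Fin n → ℝ,
      |A.det| * mvGaussDensity μ S (A *ᵥ y + μ) = gProd y := by
    intro y
    unfold mvGaussDensity gProd gaussN
    rw [add_sub_cancel_right, hq y]
    have h2π : (0:ℝ) < 2 * π := by positivity
    have hSd : S.det ^ (-(1:ℝ)/2) = |A.det|⁻¹ := by
      have h1 : S.det = |A.det| ^ (2:ℕ) := by
        rw [pow_two, abs_mul_abs_self, hdd]
      rw [h1, ← Real.rpow_natCast |A.det| 2, ← Real.rpow_mul (abs_nonneg _)]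
      norm_num
      exact (Real.rpow_neg_one _).trans rfl
    have hcn : (2 * π) ^ (-(n:ℝ)/2) = ((2 * π) ^ (-(1:ℝ)/2)) ^ (n:ℕ) := by
      rw [← Real.rpow_natCast ((2 * π) ^ (-(1:ℝ)/2)) n, ← Real.rpow_mul h2π.le]
      congr 1
      ring
    have hexp : Real.exp (-(1/2) * (y ⬝ᵥ y)) = ∏ t, Real.exp (-(1/2) * (y t)^2) := by
      rw [← Real.exp_sum]
      congr 1
      rw [dotProduct, Finset.mul_sum]
      exact Finset.sum_congr rfl fun t _ => by ring
    rw [hSd, hcn, hexp, Finset.prod_mul_distrib, Finset.prod_const]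
    simp only [Finset.card_univ, Fintype.card_fin]
    try field_simp
    try ring
  -- Step 1 : withDensity
  have step1 : ∫ x, F x ∂(mvGaussMeasure μ S)
      = ∫ x, mvGaussDensity μ S x * F x := by
    have hmeas : Measurable fun x => Real.toNNReal (mvGaussDensity μ S x) :=
      continuous_mvGaussDensity.measurable.real_toNNReal
    have : mvGaussMeasure μ S
        = volume.withDensity fun x => ((Real.toNNReal (mvGaussDensity μ S x) : ℝ≥0) : ℝ≥0∞) :=
      rfl
    rw [this, integral_withDensity_eq_integral_smul hmeas]
    refine integral_congr_ae (Eventually.of_forall fun x => ?_)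
    simp [NNReal.smul_def, Real.coe_toNNReal _ (mvGaussDensity_nonneg hS x)]
  -- Step 2 : translation
  have step2 : ∫ x, mvGaussDensity μ S x * F x
      = ∫ z, mvGaussDensity μ S (z + μ) * F (z + μ) := by
    exact (integral_add_right_eq_self (fun x => mvGaussDensity μ S x * F x) μ).symm
  -- Step 3 : linear change of variables
  have hGcont : Continuous fun z => mvGaussDensity μ S (z + μ) * F (z + μ) := by
    have hadd : Continuous fun z : Fin n → ℝ => z + μ := continuous_id.add continuous_const
    exact ((continuous_mvGaussDensity.comp hadd).mul (hF.comp hadd))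
  have hlin : Continuous (Matrix.toLin' A) := LinearMap.continuous_on_pi _
  have hvol : (volume : Measure (Fin n → ℝ))
      = ENNReal.ofReal |A.det| • Measure.map (Matrix.toLin' A) volume := by
    rw [Real.map_matrix_volume_pi_eq_smul_volume_pi hd, smul_smul,
      ← ENNReal.ofReal_mul (abs_nonneg _), abs_inv,
      mul_inv_cancel₀ (abs_ne_zero.mpr hd), ENNReal.ofReal_one, one_smul]
  have step3 : ∫ z, mvGaussDensity μ S (z + μ) * F (z + μ)
      = |A.det| * ∫ y, mvGaussDensity μ S (A *ᵥ y + μ) * F (A *ᵥ y + μ) := by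
    conv_lhs => rw [hvol]
    rw [integral_smul_measure, ENNReal.toReal_ofReal (abs_nonneg _),
      integral_map hlin.measurable.aemeasurable hGcont.aestronglyMeasurable]
    simp only [Matrix.toLin'_apply, smul_eq_mul]
  rw [step1, step2, step3, ← integral_const_mul]
  refine integral_congr_ae (Eventually.of_forall fun y => ?_)
  have := hdens y
  calc |A.det| * (mvGaussDensity μ S (A *ᵥ y + μ) * F (A *ᵥ y + μ))
      = (|A.det| * mvGaussDensity μ S (A *ᵥ y + μ)) * F (A *ᵥ y + μ) := by ring
    _ = F (A *ᵥ y + μ) * gProd y := by rw [this]; ring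

end CoV


/-- The (Σ,Σ)-block g_{ΣΣ} = (1/2)Σ⁻¹⊗Σ⁻¹ of the Fisher metric of the multivariate Gaussian
family in symmetrized component form: with K = Σ⁻¹,
∫ M_{ab} M_{cd} dν = (1/4)(K_{ac}K_{bd} + K_{ad}K_{bc}). -/
theorem mvGaussian_fisher_Sigma_Sigma (n : ℕ) (hn : 1 ≤ n) (μ : Fin n → ℝ)
    (S : Matrix (Fin n) (Fin n) ℝ) (hS : S.PosDef) (hSsymm : S.IsSymm) (a b c d : Fin n) :
    ∫ x, mvScoreSigma μ S x a b * mvScoreSigma μ S x c d ∂(mvGaussMeasure μ S) =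
      (1 / 4) * (S⁻¹ a c * S⁻¹ b d + S⁻¹ a d * S⁻¹ b c) := by
  set A := psdSqrt S with hAdef
  have hAA : A * A = S := psdSqrt_mul_self hS.posSemidef
  have hdetS : 0 < S.det := hS.det_pos
  have hdd : A.det * A.det = S.det := by rw [← Matrix.det_mul, hAA]
  have hd : A.det ≠ 0 := by
    intro h
    rw [h, mul_zero] at hdd
    exact hdetS.ne hdd
  have hAsymm : Aᵀ = A := by
    have := (psdSqrt_posSemidef (S := S)).isHermitian.eq
    rwa [Matrix.conjTranspose_eq_transpose_of_trivial] at this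
  have hCA : A⁻¹ * A = 1 := Matrix.nonsing_inv_mul A hd.isUnit
  have hSinv : S⁻¹ = A⁻¹ * A⁻¹ := by rw [← hAA, Matrix.mul_inv_rev]
  have hKA : S⁻¹ * A = A⁻¹ := by
    rw [hSinv, Matrix.mul_assoc, hCA, Matrix.mul_one]
  have hCsymm : (A⁻¹)ᵀ = A⁻¹ := by rw [Matrix.transpose_nonsing_inv, hAsymm]
  have hF : Continuous fun x => mvScoreSigma μ S x a b * mvScoreSigma μ S x c d :=
    (continuous_score_entry hSsymm a b).mul (continuous_score_entry hSsymm c d)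
  rw [gauss_cov hS hSsymm _ hF]
  have hscore : ∀ (y : Fin n → ℝ) (p q : Fin n), mvScoreSigma μ S (A *ᵥ y + μ) p q
      = -(1/2) * S⁻¹ p q + (1/2) * ((A⁻¹ p ⬝ᵥ y) * (A⁻¹ q ⬝ᵥ y)) := by
    intro y p q
    rw [score_entry hSsymm, add_sub_cancel_right, Matrix.mulVec_mulVec, hKA]
    rfl
  have hK : ∀ p q, S⁻¹ p q = A⁻¹ p ⬝ᵥ A⁻¹ q := by
    intro p q
    rw [hSinv, Matrix.mul_apply, dotProduct]
    refine Finset.sum_congr rfl fun t _ => ?_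
    have h1 : A⁻¹ t q = (A⁻¹)ᵀ q t := (Matrix.transpose_apply _ _ _).symm
    rw [h1, hCsymm]
  have hfun : (fun y : Fin n → ℝ =>
      mvScoreSigma μ S (A *ᵥ y + μ) a b * mvScoreSigma μ S (A *ᵥ y + μ) c d * gProd y)
      = fun y => (1/4) * ((A⁻¹ a ⬝ᵥ y) * (A⁻¹ b ⬝ᵥ y) * (A⁻¹ c ⬝ᵥ y) * (A⁻¹ d ⬝ᵥ y) * gProd y)
          - (1/4 * S⁻¹ c d) * ((A⁻¹ a ⬝ᵥ y) * (A⁻¹ b ⬝ᵥ y) * gProd y)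
          - (1/4 * S⁻¹ a b) * ((A⁻¹ c ⬝ᵥ y) * (A⁻¹ d ⬝ᵥ y) * gProd y)
          + (1/4 * S⁻¹ a b * S⁻¹ c d) * gProd y := by
    funext y
    rw [hscore y a b, hscore y c d]
    ring
  rw [hfun]
  have i4 := (integrable_dot4 (A⁻¹ a) (A⁻¹ b) (A⁻¹ c) (A⁻¹ d)).const_mul (1/4 : ℝ)
  have i2ab := (integrable_dot2 (A⁻¹ a) (A⁻¹ b)).const_mul (1/4 * S⁻¹ c d)
  have i2cd := (integrable_dot2 (A⁻¹ c) (A⁻¹ d)).const_mul (1/4 * S⁻¹ a b)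
  have ig := (integrable_gProd (n := n)).const_mul (1/4 * S⁻¹ a b * S⁻¹ c d)
  have hsub2 : Integrable (fun y : Fin n → ℝ =>
      (1/4) * ((A⁻¹ a ⬝ᵥ y) * (A⁻¹ b ⬝ᵥ y) * (A⁻¹ c ⬝ᵥ y) * (A⁻¹ d ⬝ᵥ y) * gProd y)
        - (1/4 * S⁻¹ c d) * ((A⁻¹ a ⬝ᵥ y) * (A⁻¹ b ⬝ᵥ y) * gProd y)) := i4.sub i2ab
  have hsub3 : Integrable (fun y : Fin n → ℝ =>
      (1/4) * ((A⁻¹ a ⬝ᵥ y) * (A⁻¹ b ⬝ᵥ y) * (A⁻¹ c ⬝ᵥ y) * (A⁻¹ d ⬝ᵥ y) * gProd y)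
        - (1/4 * S⁻¹ c d) * ((A⁻¹ a ⬝ᵥ y) * (A⁻¹ b ⬝ᵥ y) * gProd y)
        - (1/4 * S⁻¹ a b) * ((A⁻¹ c ⬝ᵥ y) * (A⁻¹ d ⬝ᵥ y) * gProd y)) := hsub2.sub i2cd
  rw [integral_add hsub3 ig]
  rw [integral_sub hsub2 i2cd]
  rw [integral_sub i4 i2ab, MeasureTheory.integral_const_mul, MeasureTheory.integral_const_mul,
    MeasureTheory.integral_const_mul, MeasureTheory.integral_const_mul,
    integral_dot4, integral_dot2, integral_dot2, integral_gProd,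
    ← hK a b, ← hK a c, ← hK a d, ← hK b c, ← hK b d, ← hK c d]
  ring
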